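/- Let E, F be Banach lattices, T : E → F a positive operator such that T(A) is norm totally bounded for a set A ⊆ E_+, and 𝒮 a set of positive operators each dominated by T (0 ≤ S ≤ T for all S ∈ 𝒮). Then for each ε > 0 there exists u ∈ F_+ such that sup_{S∈𝒮} ‖(Sx − u)^+‖ ≤ ε for all x ∈ A. -/

import Mathlib

open Filter Topology Metric Set

/-- Collective Aliprantis–Burkinshaw approximation lemma: if every `S ∈ 𝒮` satisfies
`0 ≤ S ≤ T` and `T(A)` is norm totally bounded for `A ⊆ E₊`, then for each `ε > 0`
there is `u ∈ F₊` with `‖(Sx - u)⁺‖ ≤ ε` for all `S ∈ 𝒮` and `x ∈ A`. -/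
theorem collective_domination_approximation {E F : Type*}
    [NormedAddCommGroup E] [Lattice E] [HasSolidNorm E] [IsOrderedAddMonoid E] [NormedSpace ℝ E] [CompleteSpace E]
    [NormedAddCommGroup F] [Lattice F] [HasSolidNorm F] [IsOrderedAddMonoid F] [NormedSpace ℝ F] [CompleteSpace F]
    (T : E →L[ℝ] F) (hTpos : ∀ x : E, 0 ≤ x → 0 ≤ T x)
    (A : Set E) (hA : ∀ x ∈ A, 0 ≤ x) (hTA : TotallyBounded (T '' A))
    (𝒮 : Set (E →L[ℝ] F))
    (hSpos : ∀ S ∈ 𝒮, ∀ x : E, 0 ≤ x → 0 ≤ S x)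
    (hdom : ∀ S ∈ 𝒮, ∀ x : E, 0 ≤ x → S x ≤ T x) :
    ∀ ε > (0 : ℝ), ∃ u : F, 0 ≤ u ∧ ∀ S ∈ 𝒮, ∀ x ∈ A, ‖(S x - u) ⊔ 0‖ ≤ ε := by
  intro ε hε
  rcases (totallyBounded_iff.mp hTA) ε hε with ⟨t, htfin, hcov⟩
  classical
  refine ⟨∑ y ∈ htfin.toFinset, y ⊔ 0, Finset.sum_nonneg fun y _ => le_sup_right, ?_⟩
  intro S hS x hx
  obtain ⟨y, hyt, hy⟩ := mem_iUnion₂.mp (hcov (mem_image_of_mem T hx))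
  have hyu : y ≤ ∑ z ∈ htfin.toFinset, z ⊔ 0 :=
    le_trans le_sup_left
      (Finset.single_le_sum (f := fun z => z ⊔ 0)
        (fun z _ => le_sup_right) (htfin.mem_toFinset.mpr hyt))
  have h1 : S x - ∑ z ∈ htfin.toFinset, z ⊔ 0 ≤ T x - y :=
    sub_le_sub (hdom S hS x (hA x hx)) hyu
  have h2 : (S x - ∑ z ∈ htfin.toFinset, z ⊔ 0) ⊔ 0 ≤ |T x - y| :=
    sup_le (h1.trans (le_abs_self _)) (abs_nonneg _)
  have h3 : ‖(S x - ∑ z ∈ htfin.toFinset, z ⊔ 0) ⊔ 0‖ ≤ ‖T x - y‖ := by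
    rw [← norm_abs_eq_norm (T x - y)]
    exact HasSolidNorm.solid (by rw [abs_of_nonneg le_sup_right, abs_abs]; exact h2)
  have h4 : ‖T x - y‖ ≤ ε := by
    rw [mem_ball, dist_eq_norm] at hy
    exact hy.le
  exact h3.trans h4
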